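/- There exist a finite connected graph G (a grid), disjoint agent sets A and B, a common favorite node for all agents, and window size w = 1 such that for every tolerance parameter τ with 1/2 < τ ≤ 2/3 there is an improving response cycle in the common-favorites jump Schelling game: a sequence of placements p_0, p_1, …, p_6 with p_6 = p_0 in which each p_{i+1} arises from p_i by an improving jump of a single agent. Consequently, for 1/2 < τ ≤ 2/3 there exists no ordinal potential function for the cf-JSG (and hence for the JSG). -/

import Mathlib

open SimpleGraph Finset

namespace Schelling

variable {V I : Type*}

/-- The `w`-neighborhood of a node `u`: all nodes `v ≠ u` with `d_G(u,v) ≤ w`. -/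
def nbhd (G : SimpleGraph V) (w : ℕ) (u : V) : Set V :=
  {v | v ≠ u ∧ G.dist u v ≤ w}

/-- `|N⁺(p(x))|`: number of nodes in the `w`-neighborhood of `p x` occupied by
agents of the same type as `x`. -/
noncomputable def sCount (G : SimpleGraph V) (w : ℕ) (tp : I → Bool) (p : I → V) (x : I) : ℕ :=
  {v | v ∈ nbhd G w (p x) ∧ ∃ y, p y = v ∧ tp y = tp x}.ncard

/-- `|N⁻(p(x))|`: number of nodes in the `w`-neighborhood of `p x` occupied by
agents of the other type. -/
noncomputable def dCount (G : SimpleGraph V) (w : ℕ) (tp : I → Bool) (p : I → V) (x : I) : ℕ :=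
  {v | v ∈ nbhd G w (p x) ∧ ∃ y, p y = v ∧ tp y ≠ tp x}.ncard

/-- An agent is isolated if no node of its neighborhood is occupied. -/
def isolated (G : SimpleGraph V) (w : ℕ) (tp : I → Bool) (p : I → V) (x : I) : Prop :=
  sCount G w tp p x + dCount G w tp p x = 0

/-- The (scalar) cost of agent `x`: `τ` if isolated, otherwise
`max 0 (τ - |N⁺|/(|N⁺| + |N⁻|))`. -/
noncomputable def ucost (G : SimpleGraph V) (w : ℕ) (τ : ℝ) (tp : I → Bool) (p : I → V)
    (x : I) : ℝ :=
  if sCount G w tp p x + dCount G w tp p x = 0 then τ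
  else max 0 (τ - (sCount G w tp p x : ℝ) / ((sCount G w tp p x : ℝ) + (dCount G w tp p x : ℝ)))

/-- An agent is happy if it is not isolated and its local happiness ratio is at least `τ`. -/
def happy (G : SimpleGraph V) (w : ℕ) (τ : ℝ) (tp : I → Bool) (p : I → V) (x : I) : Prop :=
  sCount G w tp p x + dCount G w tp p x ≠ 0 ∧
    τ ≤ (sCount G w tp p x : ℝ) / ((sCount G w tp p x : ℝ) + (dCount G w tp p x : ℝ))

/-- The vector cost of agent `x`: scalar cost together with `d_G(fav_x, p x) + 1`,
to be compared lexicographically. -/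
noncomputable def vcost (G : SimpleGraph V) (w : ℕ) (τ : ℝ) (tp : I → Bool) (fav : I → V)
    (p : I → V) (x : I) : ℝ × ℕ :=
  (ucost G w τ tp p x, G.dist (fav x) (p x) + 1)

/-- The number of colored pairs `Φ(p) = (1/2) · Σ_x |N⁻(p(x))|`. -/
noncomputable def Phi [Fintype I] (G : SimpleGraph V) (w : ℕ) (tp : I → Bool) (p : I → V) : ℝ :=
  (1 / 2) * ∑ x : I, (dCount G w tp p x : ℝ)

/-- The pair potential `(Φ(p), Σ_x d_G(fav_x, p x))`, compared lexicographically. -/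
noncomputable def PhiPair [Fintype I] (G : SimpleGraph V) (w : ℕ) (tp : I → Bool) (fav : I → V)
    (p : I → V) : ℝ × ℕ :=
  (Phi G w tp p, ∑ x : I, G.dist (fav x) (p x))

/-- The placement obtained from `p` by swapping the locations of agents `x` and `y`. -/
def swapP [DecidableEq I] (p : I → V) (x y : I) : I → V := p ∘ Equiv.swap x y

/-- The agents of type `A`. -/
def typeA [Fintype I] (tp : I → Bool) : Finset I := Finset.univ.filter (fun i => tp i = true)

/-- The agents of type `B`. -/
def typeB [Fintype I] (tp : I → Bool) : Finset I := Finset.univ.filter (fun i => tp i = false)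

/-- A placement is stable for the uniform SSG if no pair of agents can both strictly
decrease their cost by swapping. -/
def uStable (G : SimpleGraph V) (w : ℕ) (τ : ℝ) (tp : I → Bool) (p : I → V)
    [DecidableEq I] : Prop :=
  ∀ x y : I, ¬ (ucost G w τ tp (swapP p x y) x < ucost G w τ tp p x ∧
                ucost G w τ tp (swapP p x y) y < ucost G w τ tp p y)

/-- A placement is stable for the SSG with favorite nodes if no pair of agents can both
strictly lexicographically decrease their cost vector by swapping. -/
def vStable (G : SimpleGraph V) (w : ℕ) (τ : ℝ) (tp : I → Bool) (fav : I → V) (p : I → V)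
    [DecidableEq I] : Prop :=
  ∀ x y : I, ¬ (toLex (vcost G w τ tp fav (swapP p x y) x) < toLex (vcost G w τ tp fav p x) ∧
                toLex (vcost G w τ tp fav (swapP p x y) y) < toLex (vcost G w τ tp fav p y))



open Classical in
/-- The weight of the (ordered) pair of nodes `(u,v)` in the jump-game potential:
`1` if both are occupied by agents of different types, `1/3` if at least one is empty,
and `0` otherwise. -/
noncomputable def edgeW (tp : I → Bool) (p : I → V) (u v : V) : ℝ :=
  if ∃ x y : I, p x = u ∧ p y = v ∧ tp x ≠ tp y then 1
  else if (∀ x : I, p x ≠ u) ∨ (∀ y : I, p y ≠ v) then 1 / 3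
  else 0

open Classical in
/-- The edge-weight potential `Φ(p) = Σ_{e ∈ E} w_e(p)`, written as half the sum over
ordered adjacent pairs (each edge is counted twice, and `edgeW` is symmetric). -/
noncomputable def jumpPhi [Fintype V] (G : SimpleGraph V) (tp : I → Bool) (p : I → V) : ℝ :=
  (1 / 2) * ∑ u : V, ∑ v : V, if G.Adj u v then edgeW tp p u v else 0

/-- A placement is stable for the uniform JSG if no agent can strictly decrease her cost
by jumping to an empty node. -/
def jStable (G : SimpleGraph V) (w : ℕ) (τ : ℝ) (tp : I → Bool) (p : I → V)
    [DecidableEq I] : Prop :=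
  ∀ (x : I) (v : V), v ∉ Set.range p →
    ¬ (ucost G w τ tp (Function.update p x v) x < ucost G w τ tp p x)

/-- The social cost of a placement: the number of unhappy agents together with the total
distance cost, compared lexicographically. -/
noncomputable def socialCost [Fintype I] (G : SimpleGraph V) (w : ℕ) (τ : ℝ) (tp : I → Bool)
    (fav : I → V) (p : I → V) : ℕ × ℕ :=
  ({x : I | ¬ happy G w τ tp p x}.ncard, ∑ x : I, (G.dist (fav x) (p x) + 1))


end Schelling

open Schelling

namespace SchellingAux

open Schelling SimpleGraph Finset

/-- Adjacency of the 3×3 grid on `Fin 9` (node `y*3+x` ↔ coordinate `(x,y)`). -/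
def gAdj : Fin 9 → Fin 9 → Bool := fun u v =>
  let e : List (ℕ × ℕ) := [(0,1),(1,2),(3,4),(4,5),(6,7),(7,8),
                           (0,3),(3,6),(1,4),(4,7),(2,5),(5,8)]
  decide ((u.val, v.val) ∈ e) || decide ((v.val, u.val) ∈ e)

def myG : SimpleGraph (Fin 9) where
  Adj u v := gAdj u v
  symm := ⟨by intro u v h; revert h; revert u v; decide⟩
  loopless := ⟨by intro u h; revert h; revert u; decide⟩

instance : DecidableRel myG.Adj := fun u v => inferInstanceAs (Decidable (gAdj u v = true))

lemma myG_conn : myG.Connected := by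
  have h0 : ∀ v : Fin 9, myG.Reachable 0 v := by
    have a01 : myG.Adj 0 1 := by decide
    have a12 : myG.Adj 1 2 := by decide
    have a03 : myG.Adj 0 3 := by decide
    have a14 : myG.Adj 1 4 := by decide
    have a25 : myG.Adj 2 5 := by decide
    have a36 : myG.Adj 3 6 := by decide
    have a67 : myG.Adj 6 7 := by decide
    have a78 : myG.Adj 7 8 := by decide
    intro v
    fin_cases v
    · exact Reachable.refl 0
    · exact a01.reachable
    · exact a01.reachable.trans a12.reachable
    · exact a03.reachable
    · exact a01.reachable.trans a14.reachable
    · exact (a01.reachable.trans a12.reachable).trans a25.reachable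
    · exact a03.reachable.trans a36.reachable
    · exact (a03.reachable.trans a36.reachable).trans a67.reachable
    · exact ((a03.reachable.trans a36.reachable).trans a67.reachable).trans a78.reachable
  exact (SimpleGraph.connected_iff myG).mpr ⟨fun u v => (h0 u).symm.trans (h0 v), ⟨0⟩⟩

lemma nbhd_one {V : Type*} {G : SimpleGraph V} (hc : G.Connected) (u : V) :
    nbhd G 1 u = {v | G.Adj u v} := by
  ext v
  simp only [nbhd, Set.mem_setOf_eq]
  constructor
  · rintro ⟨hne, hle⟩
    have h1 : G.dist u v = 1 :=
      le_antisymm hle (hc.pos_dist_of_ne (Ne.symm hne))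
    exact SimpleGraph.dist_eq_one_iff_adj.mp h1
  · intro h
    exact ⟨h.ne', le_of_eq (SimpleGraph.dist_eq_one_iff_adj.mpr h)⟩

lemma sCount_eval {V I : Type*} [Fintype V] [DecidableEq V] [Fintype I]
    {G : SimpleGraph V} [DecidableRel G.Adj] (hc : G.Connected)
    (tp : I → Bool) (p : I → V) (x : I)
    [DecidablePred fun v => G.Adj (p x) v ∧ ∃ y, p y = v ∧ tp y = tp x] :
    sCount G 1 tp p x =
      (univ.filter (fun v => G.Adj (p x) v ∧ ∃ y, p y = v ∧ tp y = tp x)).card := by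
  rw [sCount]
  have h : {v | v ∈ nbhd G 1 (p x) ∧ ∃ y, p y = v ∧ tp y = tp x} =
      ↑(univ.filter (fun v => G.Adj (p x) v ∧ ∃ y, p y = v ∧ tp y = tp x)) := by
    ext v
    simp [nbhd_one hc]
  rw [h, Set.ncard_coe_finset]

lemma dCount_eval {V I : Type*} [Fintype V] [DecidableEq V] [Fintype I]
    {G : SimpleGraph V} [DecidableRel G.Adj] (hc : G.Connected)
    (tp : I → Bool) (p : I → V) (x : I)
    [DecidablePred fun v => G.Adj (p x) v ∧ ∃ y, p y = v ∧ tp y ≠ tp x] :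
    dCount G 1 tp p x =
      (univ.filter (fun v => G.Adj (p x) v ∧ ∃ y, p y = v ∧ tp y ≠ tp x)).card := by
  rw [dCount]
  have h : {v | v ∈ nbhd G 1 (p x) ∧ ∃ y, p y = v ∧ tp y ≠ tp x} =
      ↑(univ.filter (fun v => G.Adj (p x) v ∧ ∃ y, p y = v ∧ tp y ≠ tp x)) := by
    ext v
    simp [nbhd_one hc]
  rw [h, Set.ncard_coe_finset]

def tpv : Fin 5 → Bool := ![true, true, true, false, false]
def favv : Fin 5 → Fin 9 := fun _ => 1

def P0 : Fin 5 → Fin 9 := ![6, 7, 1, 0, 3]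
def P1 : Fin 5 → Fin 9 := ![6, 2, 1, 0, 3]
def P2 : Fin 5 → Fin 9 := ![6, 2, 7, 0, 3]
def P3 : Fin 5 → Fin 9 := ![6, 1, 7, 0, 3]
def P4 : Fin 5 → Fin 9 := ![6, 1, 2, 0, 3]
def P5 : Fin 5 → Fin 9 := ![6, 7, 2, 0, 3]

lemma dist12 : myG.dist 1 2 = 1 := SimpleGraph.dist_eq_one_iff_adj.mpr (by decide)

lemma dist17 : myG.dist 1 7 = 2 := by
  have h14 : myG.dist 1 4 = 1 := SimpleGraph.dist_eq_one_iff_adj.mpr (by decide)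
  have h47 : myG.dist 4 7 = 1 := SimpleGraph.dist_eq_one_iff_adj.mpr (by decide)
  have hle : myG.dist 1 7 ≤ myG.dist 1 4 + myG.dist 4 7 := myG_conn.dist_triangle
  have hpos : 0 < myG.dist 1 7 := myG_conn.pos_dist_of_ne (by decide)
  have hne1 : myG.dist 1 7 ≠ 1 := by
    intro h
    have := SimpleGraph.dist_eq_one_iff_adj.mp h
    revert this; decide
  omega

lemma ucost_eval_10 {τ : ℝ} {p : Fin 5 → Fin 9} {x : Fin 5} (hτ : τ ≤ 2/3)
    (hs : sCount myG 1 tpv p x = 1) (hd : dCount myG 1 tpv p x = 0) :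
    ucost myG 1 τ tpv p x = 0 := by
  rw [ucost, hs, hd]
  norm_num
  linarith

lemma ucost_eval_11 {τ : ℝ} {p : Fin 5 → Fin 9} {x : Fin 5} (hτ : 1/2 < τ)
    (hs : sCount myG 1 tpv p x = 1) (hd : dCount myG 1 tpv p x = 1) :
    ucost myG 1 τ tpv p x = τ - 1/2 := by
  rw [ucost, hs, hd]
  norm_num
  linarith

lemma ucost_eval_00 {τ : ℝ} {p : Fin 5 → Fin 9} {x : Fin 5}
    (hs : sCount myG 1 tpv p x = 0) (hd : dCount myG 1 tpv p x = 0) :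
    ucost myG 1 τ tpv p x = τ := by
  rw [ucost, hs, hd]
  norm_num

lemma ucost_eval_01 {τ : ℝ} {p : Fin 5 → Fin 9} {x : Fin 5} (hτ : 1/2 < τ)
    (hs : sCount myG 1 tpv p x = 0) (hd : dCount myG 1 tpv p x = 1) :
    ucost myG 1 τ tpv p x = τ := by
  rw [ucost, hs, hd]
  norm_num
  linarith

lemma moveA {τ : ℝ} (hτ2 : τ ≤ 2/3) {p q : Fin 5 → Fin 9} {x : Fin 5}
    (hsp : sCount myG 1 tpv p x = 1) (hdp : dCount myG 1 tpv p x = 0)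
    (hsq : sCount myG 1 tpv q x = 1) (hdq : dCount myG 1 tpv q x = 0)
    (hd : myG.dist (favv x) (q x) < myG.dist (favv x) (p x)) :
    toLex (vcost myG 1 τ tpv favv q x) < toLex (vcost myG 1 τ tpv favv p x) := by
  rw [vcost, vcost, ucost_eval_10 hτ2 hsq hdq, ucost_eval_10 hτ2 hsp hdp, Prod.Lex.lt_iff]
  right
  exact ⟨rfl, by show myG.dist (favv x) (q x) + 1 < myG.dist (favv x) (p x) + 1; omega⟩

lemma moveB {τ : ℝ} (hτ1 : 1/2 < τ) (hτ2 : τ ≤ 2/3) {p q : Fin 5 → Fin 9} {x : Fin 5}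
    (hsp : sCount myG 1 tpv p x = 1) (hdp : dCount myG 1 tpv p x = 1)
    (hsq : sCount myG 1 tpv q x = 1) (hdq : dCount myG 1 tpv q x = 0) :
    toLex (vcost myG 1 τ tpv favv q x) < toLex (vcost myG 1 τ tpv favv p x) := by
  rw [vcost, vcost, ucost_eval_10 hτ2 hsq hdq, ucost_eval_11 hτ1 hsp hdp, Prod.Lex.lt_iff]
  left
  show (0:ℝ) < τ - 1/2
  linarith

lemma moveC {τ : ℝ} (hτ1 : 1/2 < τ) {p q : Fin 5 → Fin 9} {x : Fin 5}
    (hsp : sCount myG 1 tpv p x = 0) (hdp : dCount myG 1 tpv p x = 0)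
    (hsq : sCount myG 1 tpv q x = 0) (hdq : dCount myG 1 tpv q x = 1)
    (hd : myG.dist (favv x) (q x) < myG.dist (favv x) (p x)) :
    toLex (vcost myG 1 τ tpv favv q x) < toLex (vcost myG 1 τ tpv favv p x) := by
  rw [vcost, vcost, ucost_eval_01 hτ1 hsq hdq, ucost_eval_00 hsp hdp, Prod.Lex.lt_iff]
  right
  exact ⟨rfl, by show myG.dist (favv x) (q x) + 1 < myG.dist (favv x) (p x) + 1; omega⟩

lemma cP0a : sCount myG 1 tpv P0 1 = 1 := by rw [sCount_eval myG_conn]; decide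
lemma cP0b : dCount myG 1 tpv P0 1 = 0 := by rw [dCount_eval myG_conn]; decide
lemma cP1a : sCount myG 1 tpv P1 1 = 1 := by rw [sCount_eval myG_conn]; decide
lemma cP1b : dCount myG 1 tpv P1 1 = 0 := by rw [dCount_eval myG_conn]; decide
lemma cP1c : sCount myG 1 tpv P1 2 = 1 := by rw [sCount_eval myG_conn]; decide
lemma cP1d : dCount myG 1 tpv P1 2 = 1 := by rw [dCount_eval myG_conn]; decide
lemma cP2a : sCount myG 1 tpv P2 2 = 1 := by rw [sCount_eval myG_conn]; decide
lemma cP2b : dCount myG 1 tpv P2 2 = 0 := by rw [dCount_eval myG_conn]; decide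
lemma cP2c : sCount myG 1 tpv P2 1 = 0 := by rw [sCount_eval myG_conn]; decide
lemma cP2d : dCount myG 1 tpv P2 1 = 0 := by rw [dCount_eval myG_conn]; decide
lemma cP3a : sCount myG 1 tpv P3 1 = 0 := by rw [sCount_eval myG_conn]; decide
lemma cP3b : dCount myG 1 tpv P3 1 = 1 := by rw [dCount_eval myG_conn]; decide
lemma cP3c : sCount myG 1 tpv P3 2 = 1 := by rw [sCount_eval myG_conn]; decide
lemma cP3d : dCount myG 1 tpv P3 2 = 0 := by rw [dCount_eval myG_conn]; decide
lemma cP4a : sCount myG 1 tpv P4 2 = 1 := by rw [sCount_eval myG_conn]; decide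
lemma cP4b : dCount myG 1 tpv P4 2 = 0 := by rw [dCount_eval myG_conn]; decide
lemma cP4c : sCount myG 1 tpv P4 1 = 1 := by rw [sCount_eval myG_conn]; decide
lemma cP4d : dCount myG 1 tpv P4 1 = 1 := by rw [dCount_eval myG_conn]; decide
lemma cP5a : sCount myG 1 tpv P5 1 = 1 := by rw [sCount_eval myG_conn]; decide
lemma cP5b : dCount myG 1 tpv P5 1 = 0 := by rw [dCount_eval myG_conn]; decide
lemma cP5c : sCount myG 1 tpv P5 2 = 0 := by rw [sCount_eval myG_conn]; decide
lemma cP5d : dCount myG 1 tpv P5 2 = 0 := by rw [dCount_eval myG_conn]; decide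
lemma cP0c : sCount myG 1 tpv P0 2 = 0 := by rw [sCount_eval myG_conn]; decide
lemma cP0d : dCount myG 1 tpv P0 2 = 1 := by rw [dCount_eval myG_conn]; decide

lemma step0 {τ : ℝ} (hτ1 : 1/2 < τ) (hτ2 : τ ≤ 2/3) :
    toLex (vcost myG 1 τ tpv favv P1 1) < toLex (vcost myG 1 τ tpv favv P0 1) :=
  moveA hτ2 cP0a cP0b cP1a cP1b
    (by show myG.dist 1 2 < myG.dist 1 7; rw [dist12, dist17]; omega)

lemma step1 {τ : ℝ} (hτ1 : 1/2 < τ) (hτ2 : τ ≤ 2/3) :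
    toLex (vcost myG 1 τ tpv favv P2 2) < toLex (vcost myG 1 τ tpv favv P1 2) :=
  moveB hτ1 hτ2 cP1c cP1d cP2a cP2b

lemma step2 {τ : ℝ} (hτ1 : 1/2 < τ) (hτ2 : τ ≤ 2/3) :
    toLex (vcost myG 1 τ tpv favv P3 1) < toLex (vcost myG 1 τ tpv favv P2 1) :=
  moveC hτ1 cP2c cP2d cP3a cP3b
    (by show myG.dist 1 1 < myG.dist 1 2; rw [SimpleGraph.dist_self, dist12]; omega)

lemma step3 {τ : ℝ} (hτ1 : 1/2 < τ) (hτ2 : τ ≤ 2/3) :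
    toLex (vcost myG 1 τ tpv favv P4 2) < toLex (vcost myG 1 τ tpv favv P3 2) :=
  moveA hτ2 cP3c cP3d cP4a cP4b
    (by show myG.dist 1 2 < myG.dist 1 7; rw [dist12, dist17]; omega)

lemma step4 {τ : ℝ} (hτ1 : 1/2 < τ) (hτ2 : τ ≤ 2/3) :
    toLex (vcost myG 1 τ tpv favv P5 1) < toLex (vcost myG 1 τ tpv favv P4 1) :=
  moveB hτ1 hτ2 cP4c cP4d cP5a cP5b

lemma step5 {τ : ℝ} (hτ1 : 1/2 < τ) (hτ2 : τ ≤ 2/3) :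
    toLex (vcost myG 1 τ tpv favv P0 2) < toLex (vcost myG 1 τ tpv favv P5 2) :=
  moveC hτ1 cP5c cP5d cP0c cP0d
    (by show myG.dist 1 1 < myG.dist 1 2; rw [SimpleGraph.dist_self, dist12]; omega)

end SchellingAux

namespace SchellingAux

open Schelling SimpleGraph Finset

def pp : Fin 7 → Fin 5 → Fin 9 := ![P0, P1, P2, P3, P4, P5, P0]

lemma notmem {f : Fin 5 → Fin 9} {v : Fin 9} (h : ∀ y, f y ≠ v) : v ∉ Set.range f := by
  rintro ⟨y, hy⟩
  exact h y hy

end SchellingAux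

open SchellingAux

/-- There exist a finite connected graph `G` (a grid), disjoint agent sets,
a common favorite node and window size `w = 1` such that for every `τ` with `1/2 < τ ≤ 2/3`
the common-favorites jump Schelling game has an improving response cycle
`p_0, …, p_6` with `p_6 = p_0`; consequently, for such `τ` no ordinal potential function
exists for the cf-JSG (and hence for the JSG). -/
theorem cfJSG_IRC_high :
    ∃ (V : Type) (_ : Fintype V) (I : Type) (_ : Fintype I) (_ : DecidableEq I)
      (G : SimpleGraph V) (tp : I → Bool) (fav : I → V),
      G.Connected ∧
      (∃ v0 : V, ∀ i : I, fav i = v0) ∧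
      2 ≤ (typeA tp).card ∧ 2 ≤ (typeB tp).card ∧
      Fintype.card I < Fintype.card V ∧
      ∀ τ : ℝ, 1 / 2 < τ → τ ≤ 2 / 3 →
        (∃ p : Fin 7 → I → V,
          (∀ i : Fin 7, Function.Injective (p i)) ∧
          p 6 = p 0 ∧
          (∀ i : Fin 6, ∃ (x : I) (v : V),
            v ∉ Set.range (p i.castSucc) ∧
            p i.succ = Function.update (p i.castSucc) x v ∧
            toLex (vcost G 1 τ tp fav (p i.succ) x) <
              toLex (vcost G 1 τ tp fav (p i.castSucc) x))) ∧
        ¬ ∃ f : (I → V) → ℝ, ∀ q : I → V, Function.Injective q →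
            ∀ (x : I) (v : V), v ∉ Set.range q →
              toLex (vcost G 1 τ tp fav (Function.update q x v) x) <
                toLex (vcost G 1 τ tp fav q x) →
              f (Function.update q x v) < f q := by
  refine ⟨Fin 9, inferInstance, Fin 5, inferInstance, inferInstance,
    myG, tpv, favv, myG_conn, ⟨1, fun _ => rfl⟩, by decide, by decide, by decide, ?_⟩
  intro τ hτ1 hτ2
  have hinj : ∀ i : Fin 7, Function.Injective (pp i) := by decide
  have hsteps : ∀ i : Fin 6, ∃ (x : Fin 5) (v : Fin 9),
      v ∉ Set.range (pp i.castSucc) ∧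
      pp i.succ = Function.update (pp i.castSucc) x v ∧
      toLex (vcost myG 1 τ tpv favv (pp i.succ) x) <
        toLex (vcost myG 1 τ tpv favv (pp i.castSucc) x) := by
    intro i
    fin_cases i
    · exact ⟨1, 2, notmem (by decide), by decide, step0 hτ1 hτ2⟩
    · exact ⟨2, 7, notmem (by decide), by decide, step1 hτ1 hτ2⟩
    · exact ⟨1, 1, notmem (by decide), by decide, step2 hτ1 hτ2⟩
    · exact ⟨2, 2, notmem (by decide), by decide, step3 hτ1 hτ2⟩
    · exact ⟨1, 7, notmem (by decide), by decide, step4 hτ1 hτ2⟩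
    · exact ⟨2, 1, notmem (by decide), by decide, step5 hτ1 hτ2⟩
  refine ⟨⟨pp, hinj, by decide, hsteps⟩, ?_⟩
  rintro ⟨f, hf⟩
  have key : ∀ i : Fin 6, f (pp i.succ) < f (pp i.castSucc) := by
    intro i
    obtain ⟨x, v, hv, hupd, hlt⟩ := hsteps i
    have h2 := hf (pp i.castSucc) (hinj _) x v hv (hupd ▸ hlt)
    rwa [← hupd] at h2
  have k0 : f (pp 1) < f (pp 0) := key 0
  have k1 : f (pp 2) < f (pp 1) := key 1
  have k2 : f (pp 3) < f (pp 2) := key 2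
  have k3 : f (pp 4) < f (pp 3) := key 3
  have k4 : f (pp 5) < f (pp 4) := key 4
  have k5 : f (pp 0) < f (pp 5) := key 5
  linarith
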